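/- Let A be a symmetric n×n real matrix and μ₀ ∈ ℝ. Then trace(T_r^∞(μ₀, A)) = (n − r)·σ_r^∞(μ₀, A) + μ₀·σ_{r-1}^∞(μ₀, A) for all r ≥ 1. -/

import Mathlib

/-- The `k`-th elementary symmetric polynomial of `μ₁, ..., μₙ`
(with `σ₀ = 1` and `σ_k = 0` for `k > n`). -/
noncomputable def esymmVec {n : ℕ} (μ : Fin n → ℝ) (k : ℕ) : ℝ :=
  ∑ s ∈ Finset.univ.powersetCard k, ∏ i ∈ s, μ i

/-- The `r`-th weighted elementary symmetric polynomial
`σ_r^∞(μ₀, μ) = Σ_{j=0}^r (μ₀^j / j!) σ_{r-j}(μ)`. -/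
noncomputable def wsigma {n : ℕ} (μ₀ : ℝ) (μ : Fin n → ℝ) (r : ℕ) : ℝ :=
  ∑ j ∈ Finset.range (r + 1), μ₀ ^ j / (Nat.factorial j : ℝ) * esymmVec μ (r - j)

/-- The classical `r`-th Newton transformation
`T_r(A) = Σ_{j=0}^r (-1)^j σ_{r-j}(A) A^j` of a symmetric real matrix `A`,
where `σ_k(A)` is the `k`-th elementary symmetric polynomial of the eigenvalues of `A`. -/
noncomputable def cNewton {n : ℕ} (A : Matrix (Fin n) (Fin n) ℝ) (hA : A.IsHermitian)
    (r : ℕ) : Matrix (Fin n) (Fin n) ℝ :=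
  ∑ j ∈ Finset.range (r + 1), ((-1 : ℝ) ^ j * esymmVec hA.eigenvalues (r - j)) • A ^ j

/-- The `r`-th weighted Newton transformation
`T_r^∞(μ₀, A) = Σ_{j=0}^r (-1)^j σ_{r-j}^∞(μ₀, A) A^j` of a symmetric real matrix `A`. -/
noncomputable def wNewton {n : ℕ} (μ₀ : ℝ) (A : Matrix (Fin n) (Fin n) ℝ)
    (hA : A.IsHermitian) (r : ℕ) : Matrix (Fin n) (Fin n) ℝ :=
  ∑ j ∈ Finset.range (r + 1), ((-1 : ℝ) ^ j * wsigma μ₀ hA.eigenvalues (r - j)) • A ^ j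

/-! ### Auxiliary lemmas -/

/-- The power sums of a vector. -/
noncomputable def psumVec {n : ℕ} (μ : Fin n → ℝ) (k : ℕ) : ℝ := ∑ i, μ i ^ k

lemma aeval_esymm {n : ℕ} (μ : Fin n → ℝ) (k : ℕ) :
    MvPolynomial.aeval μ (MvPolynomial.esymm (Fin n) ℝ k) = esymmVec μ k := by
  simp [MvPolynomial.esymm, esymmVec, map_sum]

lemma aeval_psum {n : ℕ} (μ : Fin n → ℝ) (k : ℕ) :
    MvPolynomial.aeval μ (MvPolynomial.psum (Fin n) ℝ k) = psumVec μ k := by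
  simp [MvPolynomial.psum, psumVec, map_sum]

/-- Newton's identity for real vectors. -/
lemma newtonVec {n : ℕ} (μ : Fin n → ℝ) (k : ℕ) :
    (k : ℝ) * esymmVec μ k = (-1) ^ (k + 1) *
      ∑ a ∈ (Finset.HasAntidiagonal.antidiagonal k).filter (fun a => a.1 < k),
        (-1) ^ a.1 * esymmVec μ a.1 * psumVec μ a.2 := by
  have h := congrArg (MvPolynomial.aeval μ) (MvPolynomial.mul_esymm_eq_sum (Fin n) ℝ k)
  have e1 : ∀ j, MvPolynomial.eval μ (MvPolynomial.esymm (Fin n) ℝ j) = esymmVec μ j :=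
    fun j => aeval_esymm μ j
  have e2 : ∀ j, MvPolynomial.eval μ (MvPolynomial.psum (Fin n) ℝ j) = psumVec μ j :=
    fun j => aeval_psum μ j
  simpa [map_sum, aeval_esymm, aeval_psum, e1, e2, mul_assoc] using h

/-- The classical identity `trace (T_m) = (n - m) σ_m` in scalar form. -/
lemma trace_classical {n : ℕ} (μ : Fin n → ℝ) (m : ℕ) :
    ∑ j ∈ Finset.range (m + 1), (-1 : ℝ) ^ j * esymmVec μ (m - j) * psumVec μ j =
      ((n : ℝ) - m) * esymmVec μ m := by
  have h0 : ∑ j ∈ Finset.range (m + 1), (-1 : ℝ) ^ j * esymmVec μ (m - j) * psumVec μ j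
      = ∑ a ∈ Finset.HasAntidiagonal.antidiagonal m, (-1 : ℝ) ^ a.2 * esymmVec μ a.1 * psumVec μ a.2 := by
    rw [Finset.Nat.sum_antidiagonal_eq_sum_range_succ_mk]
    rw [← Finset.sum_range_reflect (fun k => (-1 : ℝ) ^ (m - k) * esymmVec μ k * psumVec μ (m - k)) (m+1)]
    apply Finset.sum_congr rfl
    intro j hj
    simp only [Finset.mem_range] at hj
    have h1 : m + 1 - 1 - j = m - j := by omega
    have h2 : m - (m - j) = j := by omega
    simp only [h1, h2]
  have hsplit := Finset.sum_filter_add_sum_filter_not (Finset.HasAntidiagonal.antidiagonal m)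
    (fun a => a.1 < m) (fun a => (-1 : ℝ) ^ a.2 * esymmVec μ a.1 * psumVec μ a.2)
  have hne : (Finset.HasAntidiagonal.antidiagonal m).filter (fun a => ¬ a.1 < m) = {(m, 0)} := by
    ext a
    simp only [Finset.mem_filter, Finset.HasAntidiagonal.mem_antidiagonal, Finset.mem_singleton, not_lt,
      Prod.ext_iff]
    omega
  have hsign : ∀ a ∈ (Finset.HasAntidiagonal.antidiagonal m).filter (fun a => a.1 < m),
      (-1 : ℝ) ^ a.2 * esymmVec μ a.1 * psumVec μ a.2
        = (-1 : ℝ) ^ m * ((-1 : ℝ) ^ a.1 * esymmVec μ a.1 * psumVec μ a.2) := by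
    intro a ha
    simp only [Finset.mem_filter, Finset.HasAntidiagonal.mem_antidiagonal] at ha
    have : (-1 : ℝ) ^ a.2 = (-1 : ℝ) ^ m * (-1 : ℝ) ^ a.1 := by
      rw [← pow_add]
      have h2 : m + a.1 = a.2 + 2 * a.1 := by omega
      rw [h2, pow_add, pow_mul]
      simp
    rw [this]; ring
  have hN := newtonVec μ m
  have hP0 : psumVec μ 0 = (n : ℝ) := by simp [psumVec]
  rw [pow_succ] at hN
  have hF : (-1 : ℝ) ^ m *
      ∑ a ∈ (Finset.HasAntidiagonal.antidiagonal m).filter (fun a => a.1 < m),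
        (-1 : ℝ) ^ a.1 * esymmVec μ a.1 * psumVec μ a.2 = -((m : ℝ) * esymmVec μ m) := by
    linear_combination hN
  rw [h0, ← hsplit, Finset.sum_congr rfl hsign, ← Finset.mul_sum, hF, hne]
  simp [hP0]
  ring

open Matrix in
lemma trace_pow_eq {n : ℕ} (A : Matrix (Fin n) (Fin n) ℝ) (hA : A.IsHermitian) (j : ℕ) :
    (A ^ j).trace = psumVec hA.eigenvalues j := by
  set U : Matrix (Fin n) (Fin n) ℝ := (hA.eigenvectorUnitary : Matrix (Fin n) (Fin n) ℝ) with hUdef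
  set D : Matrix (Fin n) (Fin n) ℝ := Matrix.diagonal (RCLike.ofReal ∘ hA.eigenvalues) with hDdef
  have hU : star U * U = 1 := hA.eigenvectorUnitary.2.1
  have hU' : U * star U = 1 := (mul_eq_one_comm).mp hU
  have hsp : A = U * D * star U := hA.spectral_theorem
  have key : A ^ j = U * D ^ j * star U := by
    induction j with
    | zero => simp [hU']
    | succ j ih =>
      have h2 : U * D ^ j * star U * (U * D * star U) = U * D ^ (j + 1) * star U := by
        rw [mul_assoc (U * D ^ j), ← mul_assoc (star U) (U * D) (star U),
          ← mul_assoc (star U) U D, hU, one_mul, pow_succ]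
        noncomm_ring
      rw [← hsp] at h2
      rw [pow_succ, ih, h2]
  rw [key, Matrix.trace_mul_cycle, hU, one_mul, hDdef, Matrix.diagonal_pow,
    Matrix.trace_diagonal]
  simp [RCLike.ofReal, psumVec]

/-- `trace(T_r^∞(μ₀, A)) = (n − r)·σ_r^∞(μ₀, A) + μ₀·σ_{r-1}^∞(μ₀, A)` for all `r ≥ 1`. -/
theorem trace_wNewton {n : ℕ} (μ₀ : ℝ) (A : Matrix (Fin n) (Fin n) ℝ)
    (hA : A.IsHermitian) (r : ℕ) (hr : 1 ≤ r) :
    (wNewton μ₀ A hA r).trace =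
      ((n : ℝ) - r) * wsigma μ₀ hA.eigenvalues r + μ₀ * wsigma μ₀ hA.eigenvalues (r - 1) := by
  set μ := hA.eigenvalues with hμ
  have htr : (wNewton μ₀ A hA r).trace =
      ∑ j ∈ Finset.range (r + 1), (-1 : ℝ) ^ j * wsigma μ₀ μ (r - j) * psumVec μ j := by
    rw [wNewton, Matrix.trace_sum]
    apply Finset.sum_congr rfl
    intro j _
    rw [Matrix.trace_smul, trace_pow_eq A hA j, smul_eq_mul, mul_assoc]
  -- expand wsigma and swap the two sums
  have hswap : ∑ j ∈ Finset.range (r + 1), (-1 : ℝ) ^ j * wsigma μ₀ μ (r - j) * psumVec μ j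
      = ∑ k ∈ Finset.range (r + 1), μ₀ ^ k / (Nat.factorial k : ℝ) *
          ∑ j ∈ Finset.range (r - k + 1), (-1 : ℝ) ^ j * esymmVec μ (r - k - j) * psumVec μ j := by
    simp only [wsigma, Finset.sum_mul, Finset.mul_sum]
    rw [Finset.sum_comm' (t' := Finset.range (r + 1))
      (s' := fun k => Finset.range (r - k + 1))]
    · apply Finset.sum_congr rfl
      intro k hk
      apply Finset.sum_congr rfl
      intro j hj
      simp only [Finset.mem_range] at hk hj
      have : r - j - k = r - k - j := by omega
      rw [this]
      ring
    · intro j k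
      simp only [Finset.mem_range]
      omega
  rw [htr, hswap]
  have hLHS : ∀ k ∈ Finset.range (r + 1),
      μ₀ ^ k / (Nat.factorial k : ℝ) *
        ∑ j ∈ Finset.range (r - k + 1), (-1 : ℝ) ^ j * esymmVec μ (r - k - j) * psumVec μ j
      = ((n : ℝ) - r) * (μ₀ ^ k / (Nat.factorial k : ℝ) * esymmVec μ (r - k))
        + (k : ℝ) * (μ₀ ^ k / (Nat.factorial k : ℝ)) * esymmVec μ (r - k) := by
    intro k hk
    simp only [Finset.mem_range] at hk
    rw [trace_classical μ (r - k)]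
    have : ((r - k : ℕ) : ℝ) = (r : ℝ) - (k : ℝ) := by
      rw [Nat.cast_sub (by omega)]
    rw [this]
    ring
  rw [Finset.sum_congr rfl hLHS, Finset.sum_add_distrib, ← Finset.mul_sum]
  congr 1
  -- ∑ k, k * (μ₀^k / k!) * σ_{r-k} = μ₀ * wsigma μ₀ μ (r-1)
  rw [show wsigma μ₀ μ (r - 1) = ∑ j ∈ Finset.range (r - 1 + 1),
      μ₀ ^ j / (Nat.factorial j : ℝ) * esymmVec μ (r - 1 - j) from rfl]
  rw [Finset.sum_range_succ' (fun k => (k : ℝ) * (μ₀ ^ k / (Nat.factorial k : ℝ)) * esymmVec μ (r - k)) r]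
  simp only [Nat.cast_zero, zero_mul, add_zero]
  rw [Finset.mul_sum]
  obtain ⟨r', rfl⟩ : ∃ r', r = r' + 1 := ⟨r - 1, by omega⟩
  simp only [Nat.add_sub_cancel]
  apply Finset.sum_congr rfl
  intro i hi
  have h1 : r' + 1 - (i + 1) = r' - i := by omega
  rw [h1]
  have h2 : (Nat.factorial (i + 1) : ℝ) = (i + 1) * Nat.factorial i := by
    rw [Nat.factorial_succ]; push_cast; ring
  have h3 : (Nat.factorial i : ℝ) ≠ 0 := Nat.cast_ne_zero.mpr (Nat.factorial_ne_zero i)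
  have h4 : ((i : ℝ) + 1) ≠ 0 := by positivity
  field_simp [h2]
  rw [h2]; push_cast; ring
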